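/- arXiv:2301.12544 — 3 statements merged into one kernel-verified Lean document; each statement's English description precedes it below -/
import Mathlib

section
/- For each 1 ≤ r ≤ ⌊n/2⌋, the subspace 𝔫_r = ⊕_{s ≤ r} 𝔪_s is an ideal of the Lie algebra 𝔫 of strictly upper triangular matrices. -/
open Matrix

/-- Elementary matrix `e_{i,j}` (0-based indices). -/
def elemMat (n : ℕ) (i j : Fin n) : Matrix (Fin n) (Fin n) ℝ :=
  Matrix.single i j 1

/-- The spanning set of the Heisenberg subalgebra `𝔪_s` (1-based index `s`). -/
def mSet (n s : ℕ) : Set (Matrix (Fin n) (Fin n) ℝ) :=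
  {X | ∃ i j : Fin n,
    (((i : ℕ) = s - 1 ∧ s - 1 < (j : ℕ) ∧ (j : ℕ) ≤ n - s) ∨
     ((j : ℕ) = n - s ∧ s - 1 < (i : ℕ) ∧ (i : ℕ) < n - s)) ∧
    X = elemMat n i j}

/-- The subspace `𝔪_s`. -/
def mAlg (n s : ℕ) : Submodule ℝ (Matrix (Fin n) (Fin n) ℝ) :=
  Submodule.span ℝ (mSet n s)

/-- The ideal `𝔫_r = 𝔪_1 + ⋯ + 𝔪_r`. -/
def nIdeal (n r : ℕ) : Submodule ℝ (Matrix (Fin n) (Fin n) ℝ) :=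
  ⨆ s ∈ Finset.Icc 1 r, mAlg n s

lemma mAlg_le_nIdeal {n r s : ℕ} (h : s ∈ Finset.Icc 1 r) : mAlg n s ≤ nIdeal n r :=
  le_iSup₂ (f := fun s (_ : s ∈ Finset.Icc 1 r) => mAlg n s) s h

lemma elem_mem_nIdeal {n r : ℕ} (hr : 1 ≤ r) (a b : Fin n) (hab : (a : ℕ) < b)
    (h : (a : ℕ) < r ∨ n - r ≤ (b : ℕ)) : elemMat n a b ∈ nIdeal n r := by
  have hbn : (b : ℕ) < n := b.isLt
  have han : (a : ℕ) < n := a.isLt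
  rcases le_or_gt ((a : ℕ) + (b : ℕ) + 1) n with hc | hc
  · -- row type, s = a+1
    refine mAlg_le_nIdeal (s := (a : ℕ) + 1) (by simp [Finset.mem_Icc]; omega)
      (Submodule.subset_span ?_)
    exact ⟨a, b, Or.inl ⟨by omega, by omega, by omega⟩, rfl⟩
  · -- column type, s = n - b
    refine mAlg_le_nIdeal (s := n - (b : ℕ)) (by simp [Finset.mem_Icc]; omega)
      (Submodule.subset_span ?_)
    exact ⟨a, b, Or.inr ⟨by omega, by omega, by omega⟩, rfl⟩

lemma mul_elem {n : ℕ} (X : Matrix (Fin n) (Fin n) ℝ) (i j : Fin n) :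
    X * elemMat n i j = ∑ k, X k i • elemMat n k j := by
  ext a b
  simp only [elemMat, Matrix.sum_apply, Matrix.smul_apply, Matrix.mul_apply,
    Matrix.single, Matrix.of_apply, smul_eq_mul, mul_ite, mul_one, mul_zero,
    ite_and]
  rcases eq_or_ne b j with rfl | hb
  · simp
  · simp [hb.symm, hb]

lemma elem_mul {n : ℕ} (X : Matrix (Fin n) (Fin n) ℝ) (i j : Fin n) :
    elemMat n i j * X = ∑ l, X j l • elemMat n i l := by
  ext a b
  simp only [elemMat, Matrix.sum_apply, Matrix.smul_apply, Matrix.mul_apply,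
    Matrix.single, Matrix.of_apply, smul_eq_mul, ite_mul, one_mul, zero_mul,
    ite_and]
  rcases eq_or_ne a i with rfl | ha
  · simp
  · simp [ha, ha.symm]

/-- for `1 ≤ r ≤ ⌊n/2⌋`, the subspace `𝔫_r = ⨁_{s ≤ r} 𝔪_s` is an ideal of
the Lie algebra `𝔫` of strictly upper triangular matrices: `[𝔫, 𝔫_r] ⊆ 𝔫_r`. -/
theorem nIdeal_isIdeal (n r : ℕ) (hr : 1 ≤ r) (hrn : 2 * r ≤ n)
    (X : Matrix (Fin n) (Fin n) ℝ)
    (hX : ∀ i j : Fin n, (j : ℕ) ≤ (i : ℕ) → X i j = 0) :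
    ∀ Y ∈ nIdeal n r, X * Y - Y * X ∈ nIdeal n r := by
  have hspan : nIdeal n r = Submodule.span ℝ (⋃ s ∈ Finset.Icc 1 r, mSet n s) := by
    rw [Submodule.span_iUnion₂]; rfl
  intro Y hY
  rw [hspan] at hY
  rw [hspan]
  induction hY using Submodule.span_induction with
  | zero => simp
  | add Y Z _ _ hY hZ =>
    have : X * (Y + Z) - (Y + Z) * X = (X * Y - Y * X) + (X * Z - Z * X) := by noncomm_ring
    rw [this]; exact add_mem hY hZ
  | smul c Y _ hY =>
    have : X * (c • Y) - (c • Y) * X = c • (X * Y - Y * X) := by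
      simp [mul_smul_comm, smul_mul_assoc, smul_sub]
    rw [this]; exact Submodule.smul_mem _ _ hY
  | mem Y hYm =>
    rw [← hspan]
    simp only [Set.mem_iUnion] at hYm
    obtain ⟨s, hs, i, j, hcond, rfl⟩ := hYm
    simp only [Finset.mem_Icc] at hs
    have hbn : (j : ℕ) < n := j.isLt
    -- The key property P i j
    have hij : (i : ℕ) < (j : ℕ) := by rcases hcond with ⟨h1, h2, h3⟩ | ⟨h1, h2, h3⟩ <;> omega
    have hP : (i : ℕ) < r ∨ n - r ≤ (j : ℕ) := by
      rcases hcond with ⟨h1, h2, h3⟩ | ⟨h1, h2, h3⟩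
      · left; omega
      · right; omega
    rw [mul_elem, elem_mul]
    refine sub_mem (Submodule.sum_mem _ fun k _ => ?_) (Submodule.sum_mem _ fun l _ => ?_)
    · rcases le_or_gt (i : ℕ) (k : ℕ) with hk | hk
      · rw [hX k i hk, zero_smul]; exact Submodule.zero_mem _
      · exact Submodule.smul_mem _ _ (elem_mem_nIdeal hr k j (by omega) (by omega))
    · rcases le_or_gt (l : ℕ) (j : ℕ) with hl | hl
      · rw [hX j l hl, zero_smul]; exact Submodule.zero_mem _
      · exact Submodule.smul_mem _ _ (elem_mem_nIdeal hr i l (by omega) (by omega))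
end

section
/- The Lie algebra 𝔫 of strictly upper triangular n×n matrices decomposes as the direct sum of the subalgebras 𝔪_1, ..., 𝔪_R where R = ⌊n/2⌋, and dim 𝔫 = ∑_{r=1}^R (2(n-2r)+1) = n(n-1)/2. -/
open Matrix

/-- The strictly upper triangular `n × n` real matrices (the Lie algebra `𝔫`). -/
def strictUpper (n : ℕ) : Submodule ℝ (Matrix (Fin n) (Fin n) ℝ) where
  carrier := {X | ∀ i j : Fin n, (j : ℕ) ≤ (i : ℕ) → X i j = 0}
  add_mem' := by intro a b ha hb i j h; simp [ha i j h, hb i j h]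
  zero_mem' := by intro i j h; rfl
  smul_mem' := by intro c x hx i j h; simp [hx i j h]

/-! ### Auxiliary machinery -/

/-- The index set of pairs `(i,j)` generating `𝔪_s`. -/
def mInd (n s : ℕ) : Set (Fin n × Fin n) :=
  {p | ((p.1 : ℕ) = s - 1 ∧ s - 1 < (p.2 : ℕ) ∧ (p.2 : ℕ) ≤ n - s) ∨
       ((p.2 : ℕ) = n - s ∧ s - 1 < (p.1 : ℕ) ∧ (p.1 : ℕ) < n - s)}

/-- Matrices supported on a set `S` of index pairs. -/
def suppSub (n : ℕ) (S : Set (Fin n × Fin n)) : Submodule ℝ (Matrix (Fin n) (Fin n) ℝ) where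
  carrier := {X | ∀ p : Fin n × Fin n, p ∉ S → X p.1 p.2 = 0}
  add_mem' := by intro a b ha hb p hp; simp [ha p hp, hb p hp]
  zero_mem' := by intro p hp; rfl
  smul_mem' := by intro c x hx p hp; simp [hx p hp]

lemma mem_suppSub {n : ℕ} {S : Set (Fin n × Fin n)} {X : Matrix (Fin n) (Fin n) ℝ} :
    X ∈ suppSub n S ↔ ∀ p : Fin n × Fin n, p ∉ S → X p.1 p.2 = 0 := Iff.rfl

lemma suppSub_mono {n : ℕ} {S T : Set (Fin n × Fin n)} (h : S ⊆ T) :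
    suppSub n S ≤ suppSub n T := fun X hX p hp => hX p (fun hs => hp (h hs))

/-- The basic family of elementary matrices. -/
noncomputable def emat (n : ℕ) : Fin n × Fin n → Matrix (Fin n) (Fin n) ℝ :=
  fun p => Matrix.single p.1 p.2 (1 : ℝ)

lemma emat_eq_stdBasis (n : ℕ) : emat n = ⇑(Matrix.stdBasis ℝ (Fin n) (Fin n)) := by
  funext p
  cases p with
  | mk i j => rw [Matrix.stdBasis_eq_single]; rfl

lemma emat_li (n : ℕ) : LinearIndependent ℝ (emat n) := by
  rw [emat_eq_stdBasis]
  exact (Matrix.stdBasis ℝ (Fin n) (Fin n)).linearIndependent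

lemma emat_inj (n : ℕ) : Function.Injective (emat n) :=
  (emat_li n).injective

lemma span_image_eq_suppSub (n : ℕ) (S : Set (Fin n × Fin n)) :
    Submodule.span ℝ (emat n '' S) = suppSub n S := by
  apply le_antisymm
  · rw [Submodule.span_le]
    rintro _ ⟨p, hp, rfl⟩ q hq
    have hne : q ≠ p := fun h => hq (h ▸ hp)
    simp only [emat, Matrix.single, Matrix.of_apply]
    rw [if_neg]
    rintro ⟨h1, h2⟩
    exact hne (Prod.ext h1.symm h2.symm)
  · intro X hX
    rw [matrix_eq_sum_single X]
    refine Submodule.sum_mem _ fun i _ => Submodule.sum_mem _ fun j _ => ?_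
    by_cases h : ((i, j) : Fin n × Fin n) ∈ S
    · have he : Matrix.single i j (X i j) = X i j • emat n (i, j) := by
        rw [emat, Matrix.smul_single, smul_eq_mul, mul_one]
      rw [he]
      exact Submodule.smul_mem _ _ (Submodule.subset_span ⟨(i, j), h, rfl⟩)
    · rw [hX (i, j) h]
      simp

lemma mSet_eq_image (n s : ℕ) : mSet n s = emat n '' mInd n s := by
  ext X
  constructor
  · rintro ⟨i, j, h, rfl⟩
    exact ⟨(i, j), h, rfl⟩
  · rintro ⟨⟨i, j⟩, h, rfl⟩
    exact ⟨i, j, h, rfl⟩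

lemma mAlg_eq_suppSub (n s : ℕ) : mAlg n s = suppSub n (mInd n s) := by
  rw [mAlg, mSet_eq_image, span_image_eq_suppSub]

lemma strictUpper_eq_suppSub (n : ℕ) :
    strictUpper n = suppSub n {p : Fin n × Fin n | (p.1 : ℕ) < (p.2 : ℕ)} := by
  ext X
  constructor
  · intro h p hp
    exact h p.1 p.2 (Nat.not_lt.mp hp)
  · intro h i j hij
    exact h (i, j) (Nat.not_lt.mpr hij)

lemma mInd_unique {n s t : ℕ} (hs : 1 ≤ s) (ht : 1 ≤ t) {p : Fin n × Fin n}
    (hps : p ∈ mInd n s) (hpt : p ∈ mInd n t) : s = t := by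
  obtain ⟨i, j⟩ := p
  have hi := i.isLt
  have hj := j.isLt
  simp only [mInd, Set.mem_setOf_eq] at hps hpt
  rcases hps with ⟨h1, h2, h3⟩ | ⟨h1, h2, h3⟩ <;>
    rcases hpt with ⟨g1, g2, g3⟩ | ⟨g1, g2, g3⟩ <;> omega

lemma iUnion_mInd (n : ℕ) :
    (⋃ r : Fin (n / 2), mInd n ((r : ℕ) + 1)) =
      {p : Fin n × Fin n | (p.1 : ℕ) < (p.2 : ℕ)} := by
  ext ⟨i, j⟩
  have hi := i.isLt
  have hj := j.isLt
  simp only [Set.mem_iUnion, Set.mem_setOf_eq, mInd]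
  constructor
  · rintro ⟨r, (⟨h1, h2, h3⟩ | ⟨h1, h2, h3⟩)⟩ <;> omega
  · intro hij
    by_cases hc : (i : ℕ) + 1 ≤ n - (j : ℕ)
    · exact ⟨⟨(i : ℕ), by omega⟩, Or.inl (by simp; omega)⟩
    · exact ⟨⟨n - (j : ℕ) - 1, by omega⟩, Or.inr (by simp; omega)⟩

lemma sumArith : ∀ n : ℕ,
    (∑ r ∈ Finset.range (n / 2), (2 * (n - 2 * (r + 1)) + 1)) = n * (n - 1) / 2
  | 0 => by simp
  | 1 => by simp
  | (n + 2) => by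
    have ih := sumArith n
    have h2 : (n + 2) / 2 = n / 2 + 1 := by omega
    rw [h2, Finset.sum_range_succ']
    have e1 : ∀ r, 2 * ((n + 2) - 2 * (r + 1 + 1)) + 1 = 2 * (n - 2 * (r + 1)) + 1 := by
      intro r; omega
    simp only [e1]
    rw [ih]
    rcases n with _ | m
    · simp
    · obtain ⟨k, hk⟩ := Nat.even_mul_succ_self m
      have hm1 : (m + 1) * (m + 1 - 1) = m * (m + 1) := by
        rw [Nat.add_sub_cancel]; ring
      have hm2 : (m + 1 + 2) * (m + 1 + 2 - 1) = m * (m + 1) + 4 * m + 6 := by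
        rw [show m + 1 + 2 - 1 = m + 2 from rfl]; ring
      omega

lemma card_lt_pairs (n : ℕ) :
    (Finset.univ.filter fun p : Fin n × Fin n => (p.1 : ℕ) < (p.2 : ℕ)).card
      = n * (n - 1) / 2 := by
  classical
  have h1 : ((Finset.univ.filter fun p : Fin n × Fin n => (p.1 : ℕ) < (p.2 : ℕ)).card : ℕ)
      = ∑ p : Fin n × Fin n, (if (p.1 : ℕ) < (p.2 : ℕ) then 1 else 0) := by
    rw [Finset.sum_boole, Nat.cast_id]
  rw [h1, Fintype.sum_prod_type]
  have h2 : ∀ i : Fin n,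
      (∑ j : Fin n, (if (i : ℕ) < (j : ℕ) then 1 else 0)) = n - 1 - (i : ℕ) := by
    intro i
    have : (∑ j : Fin n, (if (i : ℕ) < (j : ℕ) then 1 else 0) : ℕ)
        = (Finset.univ.filter fun j : Fin n => i < j).card := by
      rw [Finset.sum_boole, Nat.cast_id]
      congr 1
    rw [this]
    have : (Finset.univ.filter fun j : Fin n => i < j) = Finset.Ioi i := by
      ext j; simp
    rw [this, Fin.card_Ioi]
  simp only [h2]
  rw [Fin.sum_univ_eq_sum_range (fun i => n - 1 - i) n]
  have h3 : (∑ i ∈ Finset.range n, (n - 1 - i)) = ∑ i ∈ Finset.range n, i := by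
    rw [← Finset.sum_range_reflect (fun i => i) n]
  rw [h3, Finset.sum_range_id]

/-- `𝔫` decomposes as the direct sum of the subalgebras `𝔪_1, …, 𝔪_R`
(`R = ⌊n/2⌋`), and `dim 𝔫 = ∑_{r=1}^R (2(n-2r)+1) = n(n-1)/2`. -/
theorem strictUpper_directSum_mAlg (n : ℕ) :
    iSupIndep (fun r : Fin (n / 2) => mAlg n ((r : ℕ) + 1)) ∧
    (⨆ r : Fin (n / 2), mAlg n ((r : ℕ) + 1)) = strictUpper n ∧
    Module.finrank ℝ (strictUpper n) = ∑ r : Fin (n / 2), (2 * (n - 2 * ((r : ℕ) + 1)) + 1) ∧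
    Module.finrank ℝ (strictUpper n) = n * (n - 1) / 2 := by
  classical
  -- the supremum
  have hsup : (⨆ r : Fin (n / 2), mAlg n ((r : ℕ) + 1)) = strictUpper n := by
    have h1 : (⨆ r : Fin (n / 2), mAlg n ((r : ℕ) + 1))
        = Submodule.span ℝ (emat n '' ⋃ r : Fin (n / 2), mInd n ((r : ℕ) + 1)) := by
      rw [Set.image_iUnion, Submodule.span_iUnion]
      exact iSup_congr fun r => by rw [mAlg, mSet_eq_image]
    rw [h1, span_image_eq_suppSub, iUnion_mInd, ← strictUpper_eq_suppSub]
  -- independence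
  have hindep : iSupIndep (fun r : Fin (n / 2) => mAlg n ((r : ℕ) + 1)) := by
    rw [iSupIndep_def]
    intro r
    rw [Submodule.disjoint_def]
    intro X hX1 hX2
    have hle : (⨆ j, ⨆ _ : j ≠ r, mAlg n ((j : ℕ) + 1)) ≤
        suppSub n (⋃ j : Fin (n / 2), ⋃ _ : j ≠ r, mInd n ((j : ℕ) + 1)) := by
      refine iSup_le fun j => iSup_le fun hj => ?_
      rw [mAlg_eq_suppSub]
      exact suppSub_mono
        (Set.subset_iUnion₂ (s := fun (j : Fin (n / 2)) (_ : j ≠ r) => mInd n ((j : ℕ) + 1)) j hj)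
    have hX2' : X ∈ suppSub n (⋃ j : Fin (n / 2), ⋃ _ : j ≠ r, mInd n ((j : ℕ) + 1)) :=
      hle hX2
    rw [mAlg_eq_suppSub] at hX1
    ext i k
    by_cases h : ((i, k) : Fin n × Fin n) ∈ mInd n ((r : ℕ) + 1)
    · have hnot : ((i, k) : Fin n × Fin n) ∉
          ⋃ j : Fin (n / 2), ⋃ _ : j ≠ r, mInd n ((j : ℕ) + 1) := by
        simp only [Set.mem_iUnion, not_exists]
        rintro j hj hmem
        exact hj (Fin.ext (by
          have := mInd_unique (Nat.le_add_left 1 _) (Nat.le_add_left 1 _) hmem h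
          omega))
      simpa using hX2' (i, k) hnot
    · simpa using hX1 (i, k) h
  -- dimension
  have hrank : Module.finrank ℝ (strictUpper n) = n * (n - 1) / 2 := by
    set U : Set (Fin n × Fin n) := {p : Fin n × Fin n | (p.1 : ℕ) < (p.2 : ℕ)} with hU
    have hspan : strictUpper n = Submodule.span ℝ (emat n '' U) := by
      rw [span_image_eq_suppSub, strictUpper_eq_suppSub]
    haveI : Fintype U := (Set.toFinite U).fintype
    haveI : Fintype (emat n '' U) := ((Set.toFinite U).image _).fintype
    have hli : LinearIndependent ℝ ((↑) : (emat n '' U) → Matrix (Fin n) (Fin n) ℝ) := by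
      rw [Set.image_eq_range]
      exact ((emat_li n).comp _ Subtype.coe_injective).linearIndepOn_id
    rw [hspan, finrank_span_set_eq_card hli]
    rw [Set.toFinset_image, Finset.card_image_of_injective _ (emat_inj n)]
    have hUf : U.toFinset = Finset.univ.filter
        (fun p : Fin n × Fin n => (p.1 : ℕ) < (p.2 : ℕ)) := by
      ext p
      simp [hU, Set.mem_toFinset]
    rw [hUf]
    exact card_lt_pairs n
  refine ⟨hindep, hsup, ?_, hrank⟩
  rw [hrank, Fin.sum_univ_eq_sum_range (fun r => 2 * (n - 2 * (r + 1)) + 1) (n / 2),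
    sumArith n]
end

section
/- In particular, for r = 1,...,⌊n/2⌋, the function E_{0,r}(X) = (leading coefficient in η of det(X - ηI)_{(r)}) on strictly lower triangular matrices X is invariant under conjugation by upper unipotent matrices: E_{0,r}(π_{𝔫_-}(u X u^{-1})) = E_{0,r}(X) for all upper unipotent u, where π_{𝔫_-} projects onto the strictly lower triangular part. -/
open Matrix Polynomial

/-- The `r`-chop characteristic polynomial `det (X - η I)_{(r)}`. -/
noncomputable def chopDet (n r : ℕ) (X : Matrix (Fin n) (Fin n) ℝ) : Polynomial ℝ :=
  Matrix.det
    ((X.map (Polynomial.C) - (Polynomial.X : Polynomial ℝ) • 1).submatrix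
      (fun i : Fin (n - r) => (⟨(i : ℕ) + r, by have := i.isLt; omega⟩ : Fin n))
      (fun j : Fin (n - r) => (⟨(j : ℕ), by have := j.isLt; omega⟩ : Fin n)))

/-- `E_{0,r}(X)`: the leading coefficient (coefficient of `η^{n-2r}`) of
`det (X - η I)_{(r)}`. -/
noncomputable def E0 (n r : ℕ) (X : Matrix (Fin n) (Fin n) ℝ) : ℝ :=
  (chopDet n r X).coeff (n - 2 * r)

/-- Projection onto the strictly lower triangular part. -/
def lowerProj (n : ℕ) (Y : Matrix (Fin n) (Fin n) ℝ) : Matrix (Fin n) (Fin n) ℝ :=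
  Matrix.of fun i j => if (j : ℕ) < (i : ℕ) then Y i j else 0

def corner (n r : ℕ) (h : 2 * r ≤ n) (Y : Matrix (Fin n) (Fin n) ℝ) :
    Matrix (Fin r) (Fin r) ℝ :=
  Matrix.of fun i j =>
    Y ⟨n - r + (i : ℕ), by have := i.isLt; omega⟩ ⟨(j : ℕ), by have := j.isLt; omega⟩

section perm

variable (n r : ℕ) (h : 2 * r ≤ n)

def s0fun : Fin (n - r) → Fin (n - r) := fun j =>
  if hj : (j : ℕ) < r then ⟨n - 2 * r + (j : ℕ), by have hh := h; have := j.isLt; omega⟩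
  else ⟨(j : ℕ) - r, by have := j.isLt; omega⟩

lemma s0fun_lt {j : Fin (n - r)} (hj : (j : ℕ) < r) :
    (s0fun n r h j : ℕ) = n - 2 * r + (j : ℕ) := by
  rw [s0fun, dif_pos hj]

lemma s0fun_ge {j : Fin (n - r)} (hj : ¬ (j : ℕ) < r) :
    (s0fun n r h j : ℕ) = (j : ℕ) - r := by
  rw [s0fun, dif_neg hj]

lemma s0fun_inj : Function.Injective (s0fun n r h) := by
  intro a b hab
  have hab' : (s0fun n r h a : ℕ) = (s0fun n r h b : ℕ) := by rw [hab]
  have ha := a.isLt; have hb := b.isLt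
  apply Fin.ext
  by_cases h1 : (a : ℕ) < r <;> by_cases h2 : (b : ℕ) < r <;>
    simp only [s0fun_lt n r h, s0fun_ge n r h, h1, h2, not_true, not_false_iff] at hab' <;>
    omega

noncomputable def sigma0 : Equiv.Perm (Fin (n - r)) :=
  Equiv.ofBijective _ (Finite.injective_iff_bijective.mp (s0fun_inj n r h))

lemma sigma0_apply (j : Fin (n - r)) : sigma0 n r h j = s0fun n r h j := rfl

def eEquiv : Fin r ≃ {j : Fin (n - r) // (j : ℕ) < r} where
  toFun a := ⟨⟨(a : ℕ), by have hh := h; have := a.isLt; omega⟩, by simpa using a.isLt⟩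
  invFun s := ⟨(s.1 : ℕ), s.2⟩
  left_inv a := rfl
  right_inv s := Subtype.ext (Fin.ext rfl)

noncomputable def iota (τ : Equiv.Perm (Fin r)) : Equiv.Perm (Fin (n - r)) :=
  sigma0 n r h * τ.extendDomain (eEquiv n r h)

lemma iota_apply_lt (τ : Equiv.Perm (Fin r)) {j : Fin (n - r)} (hj : (j : ℕ) < r) :
    (iota n r h τ j : ℕ) = n - 2 * r + (τ (⟨(j : ℕ), hj⟩ : Fin r) : ℕ) := by
  have hext : τ.extendDomain (eEquiv n r h) j
      = ((eEquiv n r h) (τ ((eEquiv n r h).symm ⟨j, hj⟩)) : Fin (n - r)) :=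
    Equiv.Perm.extendDomain_apply_subtype (p := fun j : Fin (n - r) => (j : ℕ) < r) τ (eEquiv n r h) hj
  have hsymm : (eEquiv n r h).symm ⟨j, hj⟩ = (⟨(j : ℕ), hj⟩ : Fin r) := rfl
  have hval : ((τ.extendDomain (eEquiv n r h)) j : ℕ) = (τ (⟨(j : ℕ), hj⟩ : Fin r) : ℕ) := by
    rw [hext, hsymm]; rfl
  have hlt : ((τ.extendDomain (eEquiv n r h)) j : ℕ) < r := by
    rw [hval]; exact (τ _).isLt
  rw [iota, Equiv.Perm.mul_apply, sigma0_apply, s0fun_lt n r h hlt, hval]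

lemma iota_apply_ge (τ : Equiv.Perm (Fin r)) {j : Fin (n - r)} (hj : ¬ (j : ℕ) < r) :
    (iota n r h τ j : ℕ) = (j : ℕ) - r := by
  have hext : τ.extendDomain (eEquiv n r h) j = j :=
    Equiv.Perm.extendDomain_apply_not_subtype (p := fun j : Fin (n - r) => (j : ℕ) < r) τ (eEquiv n r h) hj
  rw [iota, Equiv.Perm.mul_apply, hext, sigma0_apply, s0fun_ge n r h hj]

lemma iota_sign (τ : Equiv.Perm (Fin r)) :
    Equiv.Perm.sign (iota n r h τ)
      = Equiv.Perm.sign (sigma0 n r h) * Equiv.Perm.sign τ := by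
  rw [iota, _root_.map_mul, Equiv.Perm.sign_extendDomain]

lemma iota_injective : Function.Injective (iota n r h) := by
  intro τ τ' hττ'
  have hext : τ.extendDomain (eEquiv n r h) = τ'.extendDomain (eEquiv n r h) :=
    mul_left_cancel hττ'
  ext a
  have ha : ((eEquiv n r h a : Fin (n - r)) : ℕ) < r := (eEquiv n r h a).2
  have e1 : (τ.extendDomain (eEquiv n r h)) (eEquiv n r h a : Fin (n - r))
      = ((eEquiv n r h) (τ ((eEquiv n r h).symm ⟨(eEquiv n r h a : Fin (n - r)), ha⟩)) : Fin (n-r)) :=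
    Equiv.Perm.extendDomain_apply_subtype (p := fun j : Fin (n - r) => (j : ℕ) < r) τ (eEquiv n r h) ha
  have e2 : (τ'.extendDomain (eEquiv n r h)) (eEquiv n r h a : Fin (n - r))
      = ((eEquiv n r h) (τ' ((eEquiv n r h).symm ⟨(eEquiv n r h a : Fin (n - r)), ha⟩)) : Fin (n-r)) :=
    Equiv.Perm.extendDomain_apply_subtype (p := fun j : Fin (n - r) => (j : ℕ) < r) τ' (eEquiv n r h) ha
  have : ((eEquiv n r h) (τ ((eEquiv n r h).symm ⟨(eEquiv n r h a : Fin (n-r)), ha⟩)) : Fin (n-r))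
      = ((eEquiv n r h) (τ' ((eEquiv n r h).symm ⟨(eEquiv n r h a : Fin (n-r)), ha⟩)) : Fin (n-r)) := by
    rw [← e1, ← e2, hext]
  have := Subtype.coe_injective this
  have := (eEquiv n r h).injective this
  simpa using congrArg Fin.val this

end perm


lemma Yext {n : ℕ} (Y : Matrix (Fin n) (Fin n) ℝ) {i i' j j' : Fin n}
    (hi : (i : ℕ) = (i' : ℕ)) (hj : (j : ℕ) = (j' : ℕ)) : Y i j = Y i' j' := by
  rw [Fin.ext hi, Fin.ext hj]

lemma coeff_prod_sub (k : ℕ) (y : Fin k → ℝ) :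
    (∏ i : Fin k, (Polynomial.C (y i) - Polynomial.X)).coeff k = (-1) ^ k := by
  have h1 : (∏ i : Fin k, (C (y i) - Polynomial.X))
      = (-1 : Polynomial ℝ) ^ k * ∏ i : Fin k, (Polynomial.X - C (y i)) :=
    calc ∏ i : Fin k, (C (y i) - Polynomial.X)
        = ∏ i : Fin k, ((-1) * (Polynomial.X - C (y i))) :=
          Finset.prod_congr rfl (fun i _ => by ring)
      _ = (∏ _i : Fin k, (-1 : Polynomial ℝ)) * ∏ i : Fin k, (Polynomial.X - C (y i)) :=
          Finset.prod_mul_distrib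
      _ = (-1 : Polynomial ℝ) ^ k * ∏ i : Fin k, (Polynomial.X - C (y i)) := by
          rw [Finset.prod_const, Finset.card_univ, Fintype.card_fin]
  have hmonic : (∏ i : Fin k, (Polynomial.X - C (y i))).Monic :=
    monic_prod_of_monic _ _ (fun i _ => monic_X_sub_C _)
  have hdeg : (∏ i : Fin k, (Polynomial.X - C (y i))).natDegree = k := by
    rw [Polynomial.natDegree_prod _ _ (fun i _ => Polynomial.X_sub_C_ne_zero _)]
    simp
  have hC : ((-1 : Polynomial ℝ)) ^ k = C ((-1 : ℝ) ^ k) := by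
    simp
  have hcoeff : (∏ i : Fin k, (Polynomial.X - C (y i))).coeff k = 1 := by
    have h2 := hmonic.coeff_natDegree
    rw [hdeg] at h2
    exact h2
  rw [h1, hC, Polynomial.coeff_C_mul, hcoeff, mul_one]

theorem E0_eq_corner (n r : ℕ) (h : 2 * r ≤ n) :
    ∃ e : ℝ, ∀ Y : Matrix (Fin n) (Fin n) ℝ, E0 n r Y = e * (corner n r h Y).det := by
  classical
  set k := n - 2 * r with hkdef
  refine ⟨((Equiv.Perm.sign (sigma0 n r h) : ℤ) : ℝ) * (-1) ^ k, fun Y => ?_⟩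
  set M : Matrix (Fin (n - r)) (Fin (n - r)) (Polynomial ℝ) :=
    ((Y.map (Polynomial.C) - (Polynomial.X : Polynomial ℝ) • 1).submatrix
      (fun i : Fin (n - r) => (⟨(i : ℕ) + r, by have := i.isLt; omega⟩ : Fin n))
      (fun j : Fin (n - r) => (⟨(j : ℕ), by have := j.isLt; omega⟩ : Fin n))) with hM
  have hE0 : E0 n r Y = (M.det).coeff k := rfl
  -- entries of M
  have hentry : ∀ a b : Fin (n - r), M a b
      = C (Y ⟨(a : ℕ) + r, by have := a.isLt; omega⟩ ⟨(b : ℕ), by have := b.isLt; omega⟩)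
        - (if (a : ℕ) + r = (b : ℕ) then (Polynomial.X : Polynomial ℝ) else 0) := by
    intro a b
    by_cases hab : (a : ℕ) + r = (b : ℕ) <;>
      simp [hM, Matrix.submatrix_apply, Matrix.sub_apply, Matrix.map_apply,
        Matrix.smul_apply, Matrix.one_apply, Fin.mk.injEq, hab, smul_eq_mul]
  have hdeg : ∀ a b : Fin (n - r),
      (M a b).natDegree ≤ if (a : ℕ) + r = (b : ℕ) then 1 else 0 := by
    intro a b
    rw [hentry a b]
    by_cases hab : (a : ℕ) + r = (b : ℕ)
    · simp only [hab, if_true]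
      exact le_trans (Polynomial.natDegree_sub_le _ _) (by simp)
    · simp [hab]
  -- the two filters
  let embR : Fin r ↪ Fin (n - r) :=
    ⟨fun a => ⟨(a : ℕ), by have := a.isLt; omega⟩,
     fun a b hab => by apply Fin.ext; simpa using congrArg Fin.val hab⟩
  let embK : Fin k ↪ Fin (n - r) :=
    ⟨fun i => ⟨(i : ℕ) + r, by have := i.isLt; omega⟩,
     fun a b hab => by apply Fin.ext; have := congrArg Fin.val hab; simpa using this⟩
  have hfR : (Finset.univ.filter fun j : Fin (n - r) => (j : ℕ) < r)
      = Finset.map embR Finset.univ := by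
    ext j
    simp only [Finset.mem_filter, Finset.mem_univ, true_and, Finset.mem_map,
      Function.Embedding.coeFn_mk, embR]
    constructor
    · intro hj
      exact ⟨⟨(j : ℕ), hj⟩, Fin.ext rfl⟩
    · rintro ⟨a, rfl⟩
      exact a.isLt
  have hfK : (Finset.univ.filter fun j : Fin (n - r) => ¬ (j : ℕ) < r)
      = Finset.map embK Finset.univ := by
    ext j
    simp only [Finset.mem_filter, Finset.mem_univ, true_and, Finset.mem_map,
      Function.Embedding.coeFn_mk, embK]
    constructor
    · intro hj
      have hj' := j.isLt
      refine ⟨⟨(j : ℕ) - r, by omega⟩, Fin.ext ?_⟩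
      show (j : ℕ) - r + r = (j : ℕ)
      omega
    · rintro ⟨a, rfl⟩
      show ¬ ((a : ℕ) + r < r)
      omega
  -- vanishing off the good set
  have hvanish : ∀ σ : Equiv.Perm (Fin (n - r)),
      (∃ j : Fin (n - r), r ≤ (j : ℕ) ∧ (σ j : ℕ) + r ≠ (j : ℕ)) →
      (∏ i, M (σ i) i).coeff k = 0 := by
    rintro σ ⟨j₀, hj₀, hbad⟩
    apply Polynomial.coeff_eq_zero_of_natDegree_lt
    have h1 : (∏ i, M (σ i) i).natDegree ≤ ∑ i, (M (σ i) i).natDegree :=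
      Polynomial.natDegree_prod_le _ _
    have h2 : (∑ i, (M (σ i) i).natDegree)
        ≤ ∑ i : Fin (n - r), if (σ i : ℕ) + r = (i : ℕ) then 1 else 0 :=
      Finset.sum_le_sum (fun i _ => hdeg (σ i) i)
    have h3 : (∑ i : Fin (n - r), if (σ i : ℕ) + r = (i : ℕ) then 1 else 0)
        = (Finset.univ.filter fun i : Fin (n - r) => (σ i : ℕ) + r = (i : ℕ)).card := by
      rw [Finset.card_filter]
    have hmem : j₀ ∈ (Finset.univ.filter fun j : Fin (n - r) => ¬ (j : ℕ) < r) := by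
      simp only [Finset.mem_filter, Finset.mem_univ, true_and]; omega
    have hsub : (Finset.univ.filter fun i : Fin (n - r) => (σ i : ℕ) + r = (i : ℕ))
        ⊆ (Finset.univ.filter fun j : Fin (n - r) => ¬ (j : ℕ) < r).erase j₀ := by
      intro x hx
      simp only [Finset.mem_filter, Finset.mem_univ, true_and] at hx
      refine Finset.mem_erase.mpr ⟨?_, ?_⟩
      · rintro rfl; exact hbad hx
      · simp only [Finset.mem_filter, Finset.mem_univ, true_and]; omega
    have hcardK : (Finset.univ.filter fun j : Fin (n - r) => ¬ (j : ℕ) < r).card = k := by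
      rw [hfK, Finset.card_map, Finset.card_univ, Fintype.card_fin]
    have h4 := Finset.card_le_card hsub
    rw [Finset.card_erase_of_mem hmem, hcardK] at h4
    have hk1 : 1 ≤ k := by have := j₀.isLt; omega
    omega
  -- membership in the image for good permutations
  have hgood : ∀ σ : Equiv.Perm (Fin (n - r)),
      (∀ j : Fin (n - r), r ≤ (j : ℕ) → (σ j : ℕ) + r = (j : ℕ)) →
      ∃ τ : Equiv.Perm (Fin r), iota n r h τ = σ := by
    intro σ hσ
    set g : Equiv.Perm (Fin (n - r)) := (sigma0 n r h)⁻¹ * σ with hgdef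
    have hgfix : ∀ j : Fin (n - r), ¬ (j : ℕ) < r → g j = j := by
      intro j hj
      have h1 : σ j = sigma0 n r h j := by
        apply Fin.ext
        rw [sigma0_apply, s0fun_ge n r h hj]
        have := hσ j (le_of_not_gt hj); omega
      rw [hgdef, Equiv.Perm.mul_apply, h1]
      exact Equiv.symm_apply_apply _ _
    have hgp : ∀ j : Fin (n - r), ((j : ℕ) < r ↔ ((g j : ℕ) < r)) := by
      intro j
      constructor
      · intro hj
        by_contra hgj
        have h1 : g (g j) = g j := hgfix _ hgj
        have h2 := g.injective h1
        rw [h2] at hgj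
        exact hgj hj
      · intro hgj
        by_contra hj
        rw [hgfix j hj] at hgj
        exact hj hgj
    refine ⟨(eEquiv n r h).symm.permCongr (g.subtypePerm (fun j => (hgp j).symm)), ?_⟩
    have hext : (((eEquiv n r h).symm.permCongr (g.subtypePerm (fun j => (hgp j).symm))).extendDomain (eEquiv n r h)) = g := by
      ext j
      by_cases hj : (j : ℕ) < r
      · rw [Equiv.Perm.extendDomain_apply_subtype
          (p := fun j : Fin (n - r) => (j : ℕ) < r) _ (eEquiv n r h) hj]
        simp only [Equiv.permCongr_apply, Equiv.symm_symm, Equiv.apply_symm_apply]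
        rfl
      · rw [Equiv.Perm.extendDomain_apply_not_subtype
          (p := fun j : Fin (n - r) => (j : ℕ) < r) _ (eEquiv n r h) hj, hgfix j hj]
    rw [iota, hext, hgdef, mul_inv_cancel_left]
  -- value of the coefficient on the image
  have himage : ∀ τ : Equiv.Perm (Fin r),
      (∏ i, M ((iota n r h τ) i) i).coeff k
        = (-1 : ℝ) ^ k * ∏ a : Fin r, corner n r h Y (τ a) a := by
    intro τ
    rw [← Finset.prod_filter_mul_prod_filter_not Finset.univ
      (fun j : Fin (n - r) => (j : ℕ) < r) (fun i => M ((iota n r h τ) i) i)]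
    rw [hfR, hfK, Finset.prod_map, Finset.prod_map]
    have h1 : (∏ a : Fin r, M ((iota n r h τ) (embR a)) (embR a))
        = C (∏ a : Fin r, corner n r h Y (τ a) a) := by
      rw [map_prod]
      apply Finset.prod_congr rfl
      intro a _
      have hlt : ((embR a : Fin (n - r)) : ℕ) < r := a.isLt
      have hval : ((iota n r h τ) (embR a) : ℕ) = n - 2 * r + (τ a : ℕ) :=
        iota_apply_lt n r h τ hlt
      have hea : ((embR a : Fin (n - r)) : ℕ) = (a : ℕ) := rfl
      rw [hentry]
      rw [if_neg (by omega), sub_zero]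
      exact congrArg C (Yext Y
        (by show ((iota n r h τ) (embR a) : ℕ) + r = n - r + ((τ a : ℕ)); omega)
        (by show ((embR a : Fin (n - r)) : ℕ) = (a : ℕ); rfl))
    have h2 : (∏ i : Fin k, M ((iota n r h τ) (embK i)) (embK i))
        = ∏ i : Fin k, (C (Y ⟨(i : ℕ) + r, by have := i.isLt; omega⟩
            ⟨(i : ℕ) + r, by have := i.isLt; omega⟩) - Polynomial.X) := by
      apply Finset.prod_congr rfl
      intro i _
      have hek : ((embK i : Fin (n - r)) : ℕ) = (i : ℕ) + r := rfl
      have hge : ¬ ((embK i : Fin (n - r)) : ℕ) < r := by omega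
      have hval2 : ((iota n r h τ) (embK i) : ℕ) = ((embK i : Fin (n - r)) : ℕ) - r :=
        iota_apply_ge n r h τ hge
      rw [hentry]
      rw [if_pos (by omega)]
      exact congrArg (fun t => C t - Polynomial.X) (Yext Y
        (by show ((iota n r h τ) (embK i) : ℕ) + r = (i : ℕ) + r; omega)
        (by show ((embK i : Fin (n - r)) : ℕ) = (i : ℕ) + r; rfl))
    rw [h1, h2, Polynomial.coeff_C_mul,
      coeff_prod_sub k (fun i => Y ⟨(i : ℕ) + r, by have := i.isLt; omega⟩
        ⟨(i : ℕ) + r, by have := i.isLt; omega⟩)]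
    ring
  -- assembling everything
  rw [hE0, Matrix.det_apply, Polynomial.finset_sum_coeff]
  have hsmul : ∀ σ : Equiv.Perm (Fin (n - r)),
      (Equiv.Perm.sign σ • ∏ i, M (σ i) i).coeff k
        = ((Equiv.Perm.sign σ : ℤ) : ℝ) * (∏ i, M (σ i) i).coeff k := by
    intro σ
    rw [Units.smul_def, Polynomial.coeff_smul, zsmul_eq_mul]
  simp only [hsmul]
  have hzero : ∀ σ ∈ (Finset.univ : Finset (Equiv.Perm (Fin (n - r)))),
      σ ∉ Finset.univ.image (iota n r h) →
      ((Equiv.Perm.sign σ : ℤ) : ℝ) * (∏ i, M (σ i) i).coeff k = 0 := by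
    intro σ _ hσ
    have hbad : ∃ j : Fin (n - r), r ≤ (j : ℕ) ∧ (σ j : ℕ) + r ≠ (j : ℕ) := by
      by_contra hcon
      push_neg at hcon
      obtain ⟨τ, hτ⟩ := hgood σ hcon
      exact hσ (Finset.mem_image.mpr ⟨τ, Finset.mem_univ _, hτ⟩)
    rw [hvanish σ hbad, mul_zero]
  rw [← Finset.sum_subset (Finset.subset_univ (Finset.univ.image (iota n r h))) hzero]
  rw [Finset.sum_image (fun τ _ τ' _ hee => iota_injective n r h hee)]
  rw [Matrix.det_apply (corner n r h Y), Finset.mul_sum]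
  apply Finset.sum_congr rfl
  intro τ _
  rw [himage τ, iota_sign]
  simp only [Units.val_mul, Int.cast_mul, Units.smul_def, zsmul_eq_mul]
  ring

section mulcorner

variable (n r : ℕ) (h : 2 * r ≤ n)

def topLeft (u : Matrix (Fin n) (Fin n) ℝ) : Matrix (Fin r) (Fin r) ℝ :=
  Matrix.of fun a b => u ⟨(a : ℕ), by have hh := h; have := a.isLt; omega⟩
    ⟨(b : ℕ), by have hh := h; have := b.isLt; omega⟩

def botRight (u : Matrix (Fin n) (Fin n) ℝ) : Matrix (Fin r) (Fin r) ℝ :=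
  Matrix.of fun a b => u ⟨n - r + (a : ℕ), by have hh := h; have := a.isLt; omega⟩
    ⟨n - r + (b : ℕ), by have hh := h; have := b.isLt; omega⟩

lemma corner_mul_right (W u : Matrix (Fin n) (Fin n) ℝ)
    (hu_upper : ∀ i j : Fin n, (j : ℕ) < (i : ℕ) → u i j = 0) :
    corner n r h (W * u) = corner n r h W * topLeft n r h u := by
  ext i j
  have hi := i.isLt; have hj := j.isLt
  show (W * u) _ _ = _
  rw [Matrix.mul_apply, Matrix.mul_apply]
  rw [← Finset.sum_filter_add_sum_filter_not Finset.univ (fun l : Fin n => (l : ℕ) < r)]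
  have hz : (∑ l ∈ Finset.univ.filter (fun l : Fin n => ¬ (l : ℕ) < r),
      W ⟨n - r + (i : ℕ), by omega⟩ l * u l ⟨(j : ℕ), by omega⟩) = 0 := by
    apply Finset.sum_eq_zero
    intro l hl
    simp only [Finset.mem_filter, Finset.mem_univ, true_and] at hl
    rw [hu_upper l ⟨(j : ℕ), by omega⟩ (by show (j : ℕ) < (l : ℕ); omega), mul_zero]
  rw [hz, add_zero]
  let embRN : Fin r ↪ Fin n :=
    ⟨fun b : Fin r => ⟨(b : ℕ), by have := b.isLt; omega⟩, by
      intro a b hab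
      have h2 := congrArg (fun x : Fin n => (x : ℕ)) hab
      exact Fin.ext h2⟩
  have hfil : (Finset.univ.filter (fun l : Fin n => (l : ℕ) < r))
      = Finset.map embRN Finset.univ := by
    ext l
    simp only [Finset.mem_filter, Finset.mem_univ, true_and, Finset.mem_map,
      Function.Embedding.coeFn_mk]
    constructor
    · intro hl
      exact ⟨⟨(l : ℕ), hl⟩, Fin.ext rfl⟩
    · rintro ⟨b, rfl⟩
      exact b.isLt
  rw [hfil, Finset.sum_map]
  rfl

lemma corner_mul_left (W u : Matrix (Fin n) (Fin n) ℝ)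
    (hu_upper : ∀ i j : Fin n, (j : ℕ) < (i : ℕ) → u i j = 0) :
    corner n r h (u * W) = botRight n r h u * corner n r h W := by
  ext i j
  have hi := i.isLt; have hj := j.isLt
  show (u * W) _ _ = _
  rw [Matrix.mul_apply, Matrix.mul_apply]
  rw [← Finset.sum_filter_add_sum_filter_not Finset.univ (fun l : Fin n => n - r ≤ (l : ℕ))]
  have hz : (∑ l ∈ Finset.univ.filter (fun l : Fin n => ¬ n - r ≤ (l : ℕ)),
      u ⟨n - r + (i : ℕ), by omega⟩ l * W l ⟨(j : ℕ), by omega⟩) = 0 := by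
    apply Finset.sum_eq_zero
    intro l hl
    simp only [Finset.mem_filter, Finset.mem_univ, true_and] at hl
    rw [hu_upper ⟨n - r + (i : ℕ), by omega⟩ l (by show (l : ℕ) < n - r + (i : ℕ); omega),
      zero_mul]
  rw [hz, add_zero]
  let embBN : Fin r ↪ Fin n :=
    ⟨fun b : Fin r => ⟨n - r + (b : ℕ), by have := b.isLt; omega⟩, by
      intro a b hab
      have h2 : n - r + (a : ℕ) = n - r + (b : ℕ) := congrArg Fin.val hab
      exact Fin.ext (by omega)⟩
  have hfil : (Finset.univ.filter (fun l : Fin n => n - r ≤ (l : ℕ)))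
      = Finset.map embBN Finset.univ := by
    ext l
    simp only [Finset.mem_filter, Finset.mem_univ, true_and, Finset.mem_map,
      Function.Embedding.coeFn_mk]
    constructor
    · intro hl
      have hl' := l.isLt
      refine ⟨⟨(l : ℕ) - (n - r), by omega⟩, Fin.ext ?_⟩
      show n - r + ((l : ℕ) - (n - r)) = (l : ℕ)
      omega
    · rintro ⟨b, rfl⟩
      show n - r ≤ n - r + (b : ℕ)
      omega
  rw [hfil, Finset.sum_map]
  rfl

end mulcorner

/-- for `r = 1, …, ⌊n/2⌋`, the function `E_{0,r}` on strictly lower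
triangular matrices is invariant under the coadjoint action of the upper unipotent group:
`E_{0,r}(π_{𝔫_-}(u⁻¹ X u)) = E_{0,r}(X)` for every upper unipotent `u`. -/
theorem E0_unipotent_invariant (n r : ℕ) (hr : 1 ≤ r) (hrn : 2 * r ≤ n)
    (u X : Matrix (Fin n) (Fin n) ℝ)
    (hu_upper : ∀ i j : Fin n, (j : ℕ) < (i : ℕ) → u i j = 0)
    (hu_diag : ∀ i : Fin n, u i i = 1)
    (hX : ∀ i j : Fin n, (i : ℕ) ≤ (j : ℕ) → X i j = 0) :
    E0 n r (lowerProj n (u⁻¹ * X * u)) = E0 n r X := by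
  obtain ⟨e, he⟩ := E0_eq_corner n r hrn
  rw [he, he]
  congr 1
  have hproj : corner n r hrn (lowerProj n (u⁻¹ * X * u)) = corner n r hrn (u⁻¹ * X * u) := by
    ext i j
    have hi := i.isLt; have hj := j.isLt
    simp only [corner, lowerProj, Matrix.of_apply]
    rw [if_pos (by show (j : ℕ) < n - r + (i : ℕ); omega)]
  have hudet : u.det = 1 := by
    have hbt : u.BlockTriangular id := fun i j hij => hu_upper i j hij
    rw [Matrix.det_of_upperTriangular hbt]
    simp [hu_diag]
  have hunit : IsUnit u.det := by rw [hudet]; exact isUnit_one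
  have hcancel : u * (u⁻¹ * X * u) = X * u := by
    rw [Matrix.mul_assoc u⁻¹ X u, Matrix.mul_nonsing_inv_cancel_left u (X * u) hunit]
  have h1 : botRight n r hrn u * corner n r hrn (u⁻¹ * X * u) = corner n r hrn (X * u) := by
    rw [← corner_mul_left n r hrn (u⁻¹ * X * u) u hu_upper, hcancel]
  have h2 : corner n r hrn (X * u) = corner n r hrn X * topLeft n r hrn u :=
    corner_mul_right n r hrn X u hu_upper
  have hTL : (topLeft n r hrn u).det = 1 := by
    have hbt : (topLeft n r hrn u).BlockTriangular id := by
      intro a b hab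
      have hab' : (b : ℕ) < (a : ℕ) := hab
      exact hu_upper _ _ hab'
    rw [Matrix.det_of_upperTriangular hbt]
    have : ∀ a : Fin r, topLeft n r hrn u a a = 1 := fun a => hu_diag _
    simp [this]
  have hBR : (botRight n r hrn u).det = 1 := by
    have hbt : (botRight n r hrn u).BlockTriangular id := by
      intro a b hab
      have hab' : (b : ℕ) < (a : ℕ) := hab
      exact hu_upper _ _ (by show n - r + (b : ℕ) < n - r + (a : ℕ); omega)
    rw [Matrix.det_of_upperTriangular hbt]
    have : ∀ a : Fin r, botRight n r hrn u a a = 1 := fun a => hu_diag _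
    simp [this]
  calc (corner n r hrn (lowerProj n (u⁻¹ * X * u))).det
      = (corner n r hrn (u⁻¹ * X * u)).det := by rw [hproj]
    _ = (botRight n r hrn u).det * (corner n r hrn (u⁻¹ * X * u)).det := by
        rw [hBR, one_mul]
    _ = (corner n r hrn (X * u)).det := by rw [← Matrix.det_mul, h1]
    _ = (corner n r hrn X).det * (topLeft n r hrn u).det := by rw [h2, Matrix.det_mul]
    _ = (corner n r hrn X).det := by rw [hTL, mul_one]
end
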